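/- Let d ≥ 1, n ≥ 1, M > 0, ξ ∈ ℝ^d, and let (X^{(1)}, Y^{(1)}), …, (X^{(n)}, Y^{(n)}) be i.i.d. pairs where each X^{(i)} ~ N(0, I_{d×d}) and |Y^{(i)}| ≤ M almost surely. Define v(ξ) = Σ_{i=1}^n e^{⟨ξ, X^{(i)}⟩} Y^{(i)} X^{(i)} ∈ ℝ^d. Then for every δ > 0, P(‖v(ξ) − E[v(ξ)]‖₂ ≥ nδ) ≤ e^{2‖ξ‖₂²} M² (d + 4‖ξ‖₂²) / (n δ²). -/

import Mathlib

open MeasureTheory ProbabilityTheory Real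
open scoped NNReal RealInnerProductSpace

/-- The Gaussian measure on `EuclideanSpace ℝ (Fin d)` with mean `ξ` and covariance
`σ2` times the identity (i.e. i.i.d. `N(ξ i, σ2)` coordinates). -/
noncomputable def gaussE (d : ℕ) (ξ : EuclideanSpace ℝ (Fin d)) (σ2 : ℝ≥0) :
    Measure (EuclideanSpace ℝ (Fin d)) :=
  (Measure.pi fun i : Fin d => gaussianReal (ξ i) σ2).map
    (MeasurableEquiv.toLp 2 (Fin d → ℝ))

open scoped ENNReal

lemma gauss_transfer (g : ℝ → ℝ) :
    ∫ x, g x ∂(gaussianReal 0 1) = ∫ x, gaussianPDFReal 0 1 x * g x := by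
  rw [gaussianReal_of_var_ne_zero _ one_ne_zero, gaussianPDF_def]
  have : (fun x => ENNReal.ofReal (gaussianPDFReal 0 1 x))
      = fun x => ((gaussianPDFReal 0 1 x).toNNReal : ℝ≥0∞) := rfl
  rw [this, integral_withDensity_eq_integral_smul
    ((measurable_gaussianPDFReal 0 1).real_toNNReal)]
  congr 1 with x
  simp [NNReal.smul_def, Real.coe_toNNReal _ (gaussianPDFReal_nonneg 0 1 x)]

lemma gauss_integrable_iff (g : ℝ → ℝ) :
    Integrable g (gaussianReal 0 1) ↔
      Integrable (fun x => gaussianPDFReal 0 1 x * g x) := by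
  rw [gaussianReal_of_var_ne_zero _ one_ne_zero, gaussianPDF_def]
  have : (fun x => ENNReal.ofReal (gaussianPDFReal 0 1 x))
      = fun x => ((gaussianPDFReal 0 1 x).toNNReal : ℝ≥0∞) := rfl
  rw [this, integrable_withDensity_iff_integrable_smul
    ((measurable_gaussianPDFReal 0 1).real_toNNReal)]
  constructor <;> intro h <;> refine h.congr (Filter.Eventually.of_forall fun x => ?_) <;>
    simp [NNReal.smul_def, Real.coe_toNNReal _ (gaussianPDFReal_nonneg 0 1 x)]

lemma J0 : ∫ x : ℝ, exp (-x^2/2) = √(2*π) := by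
  have h := integral_gaussian (1/2 : ℝ)
  have h2 : ∀ x : ℝ, -(1/2 : ℝ) * x ^ 2 = -x^2/2 := fun x => by ring
  simp_rw [h2] at h
  rw [h, show (π/(1/2:ℝ)) = 2*π by ring]

lemma intJ0 : Integrable (fun x : ℝ => exp (-x^2/2)) := by
  have h := integrable_exp_neg_mul_sq (by norm_num : (0:ℝ) < 1/2)
  refine h.congr (Filter.Eventually.of_forall fun x => by ring_nf)

lemma intJ1 : Integrable (fun x : ℝ => x * exp (-x^2/2)) := by
  have h := integrable_rpow_mul_exp_neg_mul_sq (by norm_num : (0:ℝ) < 1/2)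
    (by norm_num : (-1:ℝ) < 1)
  refine h.congr (Filter.Eventually.of_forall fun x => ?_)
  show x ^ (1:ℝ) * rexp (-(1/2) * x^2) = x * rexp (-x^2/2)
  rw [Real.rpow_one]; ring_nf

lemma intJ2 : Integrable (fun x : ℝ => x^2 * exp (-x^2/2)) := by
  have h := integrable_rpow_mul_exp_neg_mul_sq (b := 1/2) (s := ((2:ℕ):ℝ))
    (by norm_num) (by norm_num)
  refine h.congr (Filter.Eventually.of_forall fun x => ?_)
  show x ^ ((2:ℕ):ℝ) * rexp (-(1/2) * x^2) = x^2 * rexp (-x^2/2)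
  rw [Real.rpow_natCast]; ring_nf

lemma hderiv_base (x : ℝ) : HasDerivAt (fun u : ℝ => exp (-u^2/2)) (-x * exp (-x^2/2)) x := by
  have h1 : HasDerivAt (fun u : ℝ => -u^2/2) (-x) x := by
    have := ((hasDerivAt_pow 2 x).neg).div_const 2
    refine this.congr_deriv ?_
    push_cast; ring
  convert h1.exp using 1
  ring

lemma J1 : ∫ x : ℝ, x * exp (-x^2/2) = 0 := by
  have hd : ∀ x : ℝ, HasDerivAt (fun u : ℝ => -exp (-u^2/2)) (x * exp (-x^2/2)) x := by
    intro x
    refine (hderiv_base x).neg.congr_deriv ?_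
    ring
  exact integral_eq_zero_of_hasDerivAt_of_integrable hd intJ1 intJ0.neg

lemma J2 : ∫ x : ℝ, x^2 * exp (-x^2/2) = √(2*π) := by
  have hd : ∀ x : ℝ, HasDerivAt (fun u : ℝ => -u * exp (-u^2/2))
      (x^2 * exp (-x^2/2) - exp (-x^2/2)) x := by
    intro x
    have h := ((hasDerivAt_id' (x := x)).neg).mul (hderiv_base x)
    refine h.congr_deriv ?_
    show -1 * rexp (-x^2/2) + -x * (-x * rexp (-x^2/2)) = x^2 * rexp (-x^2/2) - rexp (-x^2/2)
    ring
  have hint : Integrable (fun u : ℝ => -u * exp (-u^2/2)) :=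
    intJ1.neg.congr (Filter.Eventually.of_forall fun x => by simp [neg_mul])
  have h0 : ∫ x : ℝ, (x^2 * exp (-x^2/2) - exp (-x^2/2)) = 0 :=
    integral_eq_zero_of_hasDerivAt_of_integrable hd (intJ2.sub intJ0) hint
  rw [integral_sub intJ2 intJ0, J0, sub_eq_zero] at h0
  exact h0

lemma pdf01 (x : ℝ) : gaussianPDFReal 0 1 x = (√(2*π))⁻¹ * exp (-x^2/2) := by
  simp [gaussianPDFReal]

lemma sqrt2pi_ne : (√(2*π)) ≠ 0 := by
  positivity

lemma keyA (c x : ℝ) : gaussianPDFReal 0 1 x * exp (c*x)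
    = exp (c^2/2) * ((√(2*π))⁻¹ * exp (-(x-c)^2/2)) := by
  have e : -x^2/2 + c*x = c^2/2 + (-(x-c)^2/2) := by ring
  rw [pdf01, mul_assoc, ← Real.exp_add, e, Real.exp_add, ← mul_assoc,
    mul_comm ((√(2*π))⁻¹), mul_assoc]

lemma gaussAint (c : ℝ) : Integrable (fun x => exp (c*x)) (gaussianReal 0 1) := by
  rw [gauss_integrable_iff]
  simp_rw [keyA c]
  exact ((intJ0.comp_sub_right c).const_mul _).const_mul _

lemma gaussA (c : ℝ) : ∫ x, exp (c*x) ∂(gaussianReal 0 1) = exp (c^2/2) := by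
  rw [gauss_transfer]
  simp_rw [keyA c]
  rw [integral_const_mul, integral_const_mul,
    integral_sub_right_eq_self (fun u : ℝ => exp (-u^2/2)) c, J0,
    inv_mul_cancel₀ sqrt2pi_ne, mul_one]

lemma keyB (c x : ℝ) : gaussianPDFReal 0 1 x * (exp (c*x) * x^2)
    = exp (c^2/2) * ((√(2*π))⁻¹ *
      ((x-c)^2 * exp (-(x-c)^2/2) + 2*c*((x-c) * exp (-(x-c)^2/2)) + c^2 * exp (-(x-c)^2/2))) := by
  have e2 : Real.exp (-x^2/2) * Real.exp (c*x) = Real.exp (c^2/2) * Real.exp (-(x-c)^2/2) := by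
    rw [← Real.exp_add, ← Real.exp_add]; congr 1; ring
  rw [pdf01]
  calc (√(2*π))⁻¹ * exp (-x^2/2) * (exp (c*x) * x^2)
      = (exp (-x^2/2) * exp (c*x)) * ((√(2*π))⁻¹ * x^2) := by ring
    _ = (exp (c^2/2) * exp (-(x-c)^2/2)) * ((√(2*π))⁻¹ * x^2) := by rw [e2]
    _ = _ := by ring

lemma intB' (c : ℝ) : Integrable (fun x : ℝ =>
    (x-c)^2 * exp (-(x-c)^2/2) + 2*c*((x-c) * exp (-(x-c)^2/2)) + c^2 * exp (-(x-c)^2/2)) := by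
  exact ((intJ2.comp_sub_right c).add ((intJ1.comp_sub_right c).const_mul _)).add
    ((intJ0.comp_sub_right c).const_mul _)

lemma gaussBint (c : ℝ) : Integrable (fun x => exp (c*x) * x^2) (gaussianReal 0 1) := by
  rw [gauss_integrable_iff]
  simp_rw [keyB c]
  exact ((intB' c).const_mul _).const_mul _

lemma gaussB (c : ℝ) : ∫ x, exp (c*x) * x^2 ∂(gaussianReal 0 1)
    = exp (c^2/2) * (1 + c^2) := by
  have hI2 : Integrable (fun a : ℝ => (a-c)^2 * exp (-(a-c)^2/2)) := intJ2.comp_sub_right c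
  have hI1 : Integrable (fun a : ℝ => 2*c*((a-c) * exp (-(a-c)^2/2))) :=
    (intJ1.comp_sub_right c).const_mul _
  have hI0 : Integrable (fun a : ℝ => c^2 * exp (-(a-c)^2/2)) :=
    (intJ0.comp_sub_right c).const_mul _
  have hI12 : Integrable (fun a : ℝ =>
      (a-c)^2 * exp (-(a-c)^2/2) + 2*c*((a-c) * exp (-(a-c)^2/2))) := hI2.add hI1
  rw [gauss_transfer]
  simp_rw [keyB c]
  rw [integral_const_mul, integral_const_mul, integral_add hI12 hI0, integral_add hI2 hI1,
    integral_const_mul, integral_const_mul]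
  rw [integral_sub_right_eq_self (fun u : ℝ => u^2 * exp (-u^2/2)) c,
    integral_sub_right_eq_self (fun u : ℝ => u * exp (-u^2/2)) c,
    integral_sub_right_eq_self (fun u : ℝ => exp (-u^2/2)) c,
    J0, J1, J2]
  field_simp
  ring

lemma pi_gauss_int {d : ℕ} (f : Fin d → ℝ → ℝ)
    (hf : ∀ i, Integrable (f i) (gaussianReal 0 1)) :
    Integrable (fun x : Fin d → ℝ => ∏ i, f i (x i))
      (Measure.pi fun _ => gaussianReal 0 1) := by
  exact Integrable.fin_nat_prod (μ := fun _ => gaussianReal 0 1) hf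

lemma pi_gauss_eq {d : ℕ} (f : Fin d → ℝ → ℝ) :
    ∫ x : Fin d → ℝ, ∏ i, f i (x i) ∂(Measure.pi fun _ => gaussianReal 0 1)
      = ∏ i, ∫ x, f i x ∂(gaussianReal 0 1) := by
  exact integral_fin_nat_prod_eq_prod (μ := fun _ => gaussianReal 0 1) f

section moment
variable {d : ℕ} (ξ : EuclideanSpace ℝ (Fin d))

lemma gaussE_eq : gaussE d 0 1
    = (Measure.pi fun _ : Fin d => gaussianReal 0 1).map
      (MeasurableEquiv.toLp 2 (Fin d → ℝ)) := rfl

/-- the integrand pulled back to the pi space -/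
lemma pullback_eq (x : Fin d → ℝ) :
    Real.exp (2*⟪ξ, (MeasurableEquiv.toLp 2 (Fin d → ℝ)) x⟫)
      * ‖(MeasurableEquiv.toLp 2 (Fin d → ℝ)) x‖^2
    = ∑ k, ∏ j, (Real.exp (2 * ξ j * x j) * (if j = k then x j * x j else 1)) := by
  have hy : ∀ j, ((MeasurableEquiv.toLp 2 (Fin d → ℝ)) x) j = x j := fun _ => rfl
  have hinner : ⟪ξ, (MeasurableEquiv.toLp 2 (Fin d → ℝ)) x⟫ = ∑ j, ξ j * x j := by
    simp [PiLp.inner_apply, RCLike.inner_apply, hy]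
    exact Finset.sum_congr rfl fun j _ => mul_comm _ _
  have hnorm : ‖(MeasurableEquiv.toLp 2 (Fin d → ℝ)) x‖^2 = ∑ k, x k * x k := by
    rw [← real_inner_self_eq_norm_sq]
    simp only [PiLp.inner_apply, RCLike.inner_apply, conj_trivial, hy]
  rw [hinner, hnorm, Finset.mul_sum]
  refine Finset.sum_congr rfl fun k _ => ?_
  rw [Finset.prod_mul_distrib]
  have : (∏ j, if j = k then x j * x j else 1) = x k * x k := by simp
  rw [this, Finset.mul_sum, Real.exp_sum]
  congr 1
  exact Finset.prod_congr rfl fun j _ => by rw [mul_assoc]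

lemma h_int_k (k : Fin d) :
    Integrable (fun x : Fin d → ℝ =>
        ∏ j, (Real.exp (2 * ξ j * x j) * (if j = k then x j * x j else 1)))
      (Measure.pi fun _ => gaussianReal 0 1) := by
  refine pi_gauss_int (fun j t => Real.exp (2 * ξ j * t) * (if j = k then t * t else 1)) (fun j => ?_)
  by_cases h : j = k
  · subst h
    simp only [eq_self_iff_true, if_true]
    exact (gaussBint (2 * ξ j)).congr (Filter.Eventually.of_forall fun t => by simp only []; rw [pow_two])
  · simp only [if_neg h, mul_one]
    exact gaussAint (2 * ξ j)

lemma h_val_k (k : Fin d) :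
    ∫ x : Fin d → ℝ, ∏ j, (Real.exp (2 * ξ j * x j) * (if j = k then x j * x j else 1))
        ∂(Measure.pi fun _ => gaussianReal 0 1)
    = (∏ j, Real.exp (2 * ξ j ^ 2)) * (1 + 4 * ξ k ^ 2) := by
  rw [pi_gauss_eq (fun j t => Real.exp (2 * ξ j * t) * (if j = k then t * t else 1))]
  have : ∀ j : Fin d, (∫ t, Real.exp (2 * ξ j * t) * (if j = k then t * t else 1)
      ∂(gaussianReal 0 1)) = Real.exp (2 * ξ j ^ 2) * (if j = k then 1 + 4 * ξ j ^ 2 else 1) := by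
    intro j
    by_cases h : j = k
    · subst h
      simp only [eq_self_iff_true, if_true]
      have h2 : ∀ t : ℝ, Real.exp (2 * ξ j * t) * (t*t) = Real.exp (2 * ξ j * t) * t^2 :=
        fun t => by rw [pow_two]
      simp_rw [h2]
      rw [gaussB (2 * ξ j), show ((2 * ξ j)^2/2) = 2 * ξ j^2 by ring,
        show (1 + (2 * ξ j)^2) = 1 + 4 * ξ j^2 by ring]
    · simp only [if_neg h, mul_one]
      rw [gaussA (2 * ξ j)]
      congr 1; ring
  rw [Finset.prod_congr rfl fun j _ => this j, Finset.prod_mul_distrib]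
  congr 1
  simp

lemma norm_sq_eq_sum' (y : EuclideanSpace ℝ (Fin d)) : ‖y‖^2 = ∑ j, y j ^ 2 := by
  rw [← real_inner_self_eq_norm_sq]
  simp only [PiLp.inner_apply, RCLike.inner_apply, conj_trivial]
  exact Finset.sum_congr rfl fun j _ => (pow_two _).symm

lemma gaussE_moment_int :
    Integrable (fun x : EuclideanSpace ℝ (Fin d) => Real.exp (2*⟪ξ,x⟫) * ‖x‖^2)
      (gaussE d 0 1) := by
  rw [gaussE_eq]
  rw [integrable_map_equiv]
  have heq : ((fun x : EuclideanSpace ℝ (Fin d) => Real.exp (2*⟪ξ,x⟫) * ‖x‖^2)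
      ∘ (MeasurableEquiv.toLp 2 (Fin d → ℝ)))
      = fun x : Fin d → ℝ => ∑ k, ∏ j,
          (Real.exp (2 * ξ j * x j) * (if j = k then x j * x j else 1)) :=
    funext fun x => pullback_eq ξ x
  rw [heq]
  exact integrable_finset_sum _ (fun k _ => h_int_k ξ k)

lemma gaussE_moment :
    ∫ x, Real.exp (2*⟪ξ,x⟫) * ‖x‖^2 ∂(gaussE d 0 1)
      = Real.exp (2*‖ξ‖^2) * (d + 4*‖ξ‖^2) := by
  rw [gaussE_eq, integral_map_equiv]
  simp_rw [pullback_eq ξ]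
  rw [integral_finset_sum _ (fun k _ => h_int_k ξ k)]
  simp_rw [h_val_k ξ]
  have hnorm : ‖ξ‖^2 = ∑ j, ξ j ^ 2 := norm_sq_eq_sum' ξ
  calc ∑ k, (∏ j, Real.exp (2 * ξ j ^ 2)) * (1 + 4 * ξ k ^ 2)
      = (∏ j, Real.exp (2 * ξ j ^ 2)) * ∑ k, (1 + 4 * ξ k ^ 2) := by rw [Finset.mul_sum]
    _ = Real.exp (∑ j, 2 * ξ j ^ 2) * ((d : ℝ) + 4 * ∑ k, ξ k ^ 2) := by
        rw [← Real.exp_sum]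
        congr 1
        rw [Finset.sum_add_distrib, Finset.sum_const, Finset.card_univ, Fintype.card_fin,
          ← Finset.mul_sum]
        simp [nsmul_eq_mul]
    _ = Real.exp (2*‖ξ‖^2) * ((d : ℝ) + 4*‖ξ‖^2) := by
        rw [hnorm, ← Finset.mul_sum]

end moment

set_option maxHeartbeats 1600000 in
/-- For i.i.d. pairs `(X⁽ⁱ⁾, Y⁽ⁱ⁾)` with standard Gaussian covariates and responses
bounded by `M`, the vector `v(ξ) = Σᵢ e^{⟨ξ, X⁽ⁱ⁾⟩} Y⁽ⁱ⁾ X⁽ⁱ⁾` satisfies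
`P(‖v(ξ) - E v(ξ)‖ ≥ nδ) ≤ e^{2‖ξ‖²} M² (d + 4‖ξ‖²)/(nδ²)`. -/
theorem stmt10 {Ω : Type} [MeasurableSpace Ω] (μ : Measure Ω) [IsProbabilityMeasure μ]
    (d n : ℕ) (hd : 1 ≤ d) (hn : 1 ≤ n) (M : ℝ) (hM : 0 < M)
    (ξ : EuclideanSpace ℝ (Fin d))
    (X : Fin n → Ω → EuclideanSpace ℝ (Fin d)) (Y : Fin n → Ω → ℝ)
    (hmeas : ∀ i, Measurable fun ω => (X i ω, Y i ω))
    (hindep : iIndepFun (fun i ω => (X i ω, Y i ω)) μ)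
    (hident : ∀ i j, Measure.map (fun ω => (X i ω, Y i ω)) μ
        = Measure.map (fun ω => (X j ω, Y j ω)) μ)
    (hX : ∀ i, Measure.map (X i) μ = gaussE d 0 1)
    (hY : ∀ i, ∀ᵐ ω ∂μ, |Y i ω| ≤ M) :
    ∀ δ : ℝ, 0 < δ →
      (μ {ω | (n : ℝ) * δ ≤
          ‖(∑ i, (Real.exp ⟪ξ, X i ω⟫ * Y i ω) • X i ω)
            - ∫ ω', ∑ i, (Real.exp ⟪ξ, X i ω'⟫ * Y i ω') • X i ω' ∂μ‖}).toReal
        ≤ Real.exp (2 * ‖ξ‖ ^ 2) * M ^ 2 * (d + 4 * ‖ξ‖ ^ 2) / (n * δ ^ 2) := by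
  intro δ hδ
  have hn0 : (0:ℝ) < n := by exact_mod_cast hn
  set C : ℝ := Real.exp (2 * ‖ξ‖ ^ 2) * ((d:ℝ) + 4 * ‖ξ‖ ^ 2) with hCdef
  have hC0 : 0 ≤ C := by
    have : (0:ℝ) ≤ (d:ℝ) + 4 * ‖ξ‖^2 := by positivity
    positivity
  -- basic measurability
  have hXm : ∀ i, Measurable (X i) := fun i => measurable_fst.comp (hmeas i)
  have hYm : ∀ i, Measurable (Y i) := fun i => measurable_snd.comp (hmeas i)
  set v : Ω → EuclideanSpace ℝ (Fin d) :=
    fun ω => ∑ i, (Real.exp ⟪ξ, X i ω⟫ * Y i ω) • X i ω with hvdef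
  set c : EuclideanSpace ℝ (Fin d) := ∫ ω', v ω' ∂μ with hcdef
  -- coordinate functions
  set Zk : Fin d → Fin n → Ω → ℝ :=
    fun k i ω => (Real.exp ⟪ξ, X i ω⟫ * Y i ω) * X i ω k with hZkdef
  set W : Fin n → Ω → ℝ :=
    fun i ω => Real.exp (2*⟪ξ, X i ω⟫) * ‖X i ω‖^2 with hWdef
  have hWm : ∀ i, Measurable (W i) := by
    intro i
    exact ((measurable_const.mul (measurable_const.inner (hXm i))).exp).mul
      (((hXm i).norm).pow measurable_const)
  have hgmeas : Measurable (fun x : EuclideanSpace ℝ (Fin d) => Real.exp (2*⟪ξ,x⟫) * ‖x‖^2) :=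
    ((measurable_const.mul (measurable_const.inner measurable_id)).exp).mul
      (measurable_id.norm.pow measurable_const)
  have hWint : ∀ i, Integrable (W i) μ := by
    intro i
    have h1 : Integrable (fun x : EuclideanSpace ℝ (Fin d) => Real.exp (2*⟪ξ,x⟫) * ‖x‖^2)
        (Measure.map (X i) μ) := by rw [hX i]; exact gaussE_moment_int ξ
    exact (integrable_map_measure hgmeas.aestronglyMeasurable (hXm i).aemeasurable).mp h1
  have hWval : ∀ i, ∫ ω, W i ω ∂μ = C := by
    intro i
    have h1 : ∫ ω, W i ω ∂μ
        = ∫ x, Real.exp (2*⟪ξ,x⟫) * ‖x‖^2 ∂(Measure.map (X i) μ) :=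
      (integral_map (hXm i).aemeasurable hgmeas.aestronglyMeasurable).symm
    rw [h1, hX i, gaussE_moment]
  have hZkm : ∀ k i, Measurable (Zk k i) := by
    intro k i
    exact (((measurable_const.inner (hXm i)).exp).mul (hYm i)).mul
      ((measurable_pi_apply k).comp ((WithLp.measurable_ofLp 2 _).comp (hXm i)))
  -- coordinate moment bounds
  have hxk : ∀ (x : EuclideanSpace ℝ (Fin d)) k, (x k)^2 ≤ ‖x‖^2 := by
    intro x k
    rw [norm_sq_eq_sum']
    exact Finset.single_le_sum (fun j _ => sq_nonneg (x j)) (Finset.mem_univ k)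
  set Wk : Fin d → Fin n → Ω → ℝ :=
    fun k i ω => Real.exp (2*⟪ξ, X i ω⟫) * (X i ω k)^2 with hWkdef
  have hWkm : ∀ k i, Measurable (Wk k i) := by
    intro k i
    exact ((measurable_const.mul (measurable_const.inner (hXm i))).exp).mul
      (((measurable_pi_apply k).comp ((WithLp.measurable_ofLp 2 _).comp (hXm i))).pow measurable_const)
  have hWk_le : ∀ k i ω, Wk k i ω ≤ W i ω := by
    intro k i ω
    exact mul_le_mul_of_nonneg_left (hxk _ k) (Real.exp_pos _).le
  have hWk_nonneg : ∀ k i ω, 0 ≤ Wk k i ω := by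
    intro k i ω
    exact mul_nonneg (Real.exp_pos _).le (sq_nonneg _)
  have hWk_int : ∀ k i, Integrable (Wk k i) μ := by
    intro k i
    refine (hWint i).mono' (hWkm k i).aestronglyMeasurable ?_
    filter_upwards with ω
    rw [Real.norm_eq_abs, abs_of_nonneg (hWk_nonneg k i ω)]
    exact hWk_le k i ω
  have hexp2 : ∀ a : ℝ, Real.exp a ^ 2 = Real.exp (2*a) := by
    intro a
    rw [pow_two, ← Real.exp_add, two_mul]
  have hcoord : ∀ k i, ∀ᵐ ω ∂μ, (Zk k i ω)^2 ≤ M^2 * Wk k i ω := by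
    intro k i
    filter_upwards [hY i] with ω hYω
    have h1 : (Y i ω)^2 ≤ M^2 := sq_le_sq' (neg_le_of_abs_le hYω) (le_of_abs_le hYω)
    have h2 : (Zk k i ω)^2 = Real.exp (2*⟪ξ, X i ω⟫) * (Y i ω)^2 * (X i ω k)^2 := by
      simp only [hZkdef]
      rw [← hexp2]
      ring
    have h4 : Wk k i ω = Real.exp (2*⟪ξ, X i ω⟫) * (X i ω k)^2 := rfl
    rw [h2, h4]
    have e2 := (Real.exp_pos (2*⟪ξ, X i ω⟫)).le
    nlinarith [mul_nonneg (mul_nonneg e2 (sq_nonneg (X i ω k))) (sub_nonneg.mpr h1)]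
  have hZk2int : ∀ k i, Integrable (fun ω => (Zk k i ω)^2) μ := by
    intro k i
    refine ((hWk_int k i).const_mul (M^2)).mono'
      (((hZkm k i).pow measurable_const).aestronglyMeasurable) ?_
    filter_upwards [hcoord k i] with ω hω
    rw [Real.norm_eq_abs, abs_of_nonneg (sq_nonneg _)]
    exact hω
  have hMem : ∀ k i, MemLp (Zk k i) 2 μ := fun k i =>
    (memLp_two_iff_integrable_sq (hZkm k i).aestronglyMeasurable).mpr (hZk2int k i)
  have hZk2val : ∀ k i, ∫ ω, (Zk k i ω)^2 ∂μ ≤ M^2 * ∫ ω, Wk k i ω ∂μ := by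
    intro k i
    rw [← integral_const_mul]
    exact integral_mono_ae (hZk2int k i) ((hWk_int k i).const_mul _) (hcoord k i)
  have hWk_sum : ∀ i, ∑ k, ∫ ω, Wk k i ω ∂μ = C := by
    intro i
    rw [← integral_finset_sum _ (fun k _ => hWk_int k i), ← hWval i]
    congr 1
    funext ω
    rw [hWdef]
    simp only [hWkdef]
    rw [← Finset.mul_sum, ← norm_sq_eq_sum']
  -- independence of coordinates
  have hZk_indep : ∀ k, iIndepFun (fun i => Zk k i) μ := by
    intro k
    have hgm : ∀ i : Fin n, Measurable (fun p : (EuclideanSpace ℝ (Fin d)) × ℝ =>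
        (Real.exp ⟪ξ, p.1⟫ * p.2) * p.1 k) := by
      intro i
      exact (((measurable_const.inner measurable_fst).exp).mul measurable_snd).mul
        ((measurable_pi_apply k).comp ((WithLp.measurable_ofLp 2 _).comp measurable_fst))
    exact hindep.comp _ hgm
  -- sums
  set Sk : Fin d → Ω → ℝ := fun k => ∑ i, Zk k i with hSkdef
  have hSk_app : ∀ k ω, Sk k ω = ∑ i, Zk k i ω := by
    intro k ω
    rw [hSkdef]
    simp [Finset.sum_apply]
  have hSkMem : ∀ k, MemLp (Sk k) 2 μ := fun k =>
    memLp_finset_sum' _ (fun i _ => hMem k i)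
  have hVarSk : ∀ k, variance (Sk k) μ = ∑ i, variance (Zk k i) μ := by
    intro k
    exact IndepFun.variance_sum (fun i _ => hMem k i)
      (fun i _ j _ hij => (hZk_indep k).indepFun hij)
  -- integrability of v
  have hZm : ∀ i, Measurable (fun ω => (Real.exp ⟪ξ, X i ω⟫ * Y i ω) • X i ω) := by
    intro i
    exact (((measurable_const.inner (hXm i)).exp).mul (hYm i)).smul (hXm i)
  have hZint : ∀ i, Integrable (fun ω => (Real.exp ⟪ξ, X i ω⟫ * Y i ω) • X i ω) μ := by
    intro i
    refine Integrable.mono' (((integrable_const (1:ℝ)).add (hWint i)).const_mul M)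
      (hZm i).aestronglyMeasurable ?_
    filter_upwards [hY i] with ω hYω
    rw [norm_smul, Real.norm_eq_abs, abs_mul, abs_of_pos (Real.exp_pos _)]
    have hnn : (0:ℝ) ≤ Real.exp ⟪ξ, X i ω⟫ * ‖X i ω‖ :=
      mul_nonneg (Real.exp_pos _).le (norm_nonneg _)
    have h2 : (Real.exp ⟪ξ, X i ω⟫ * ‖X i ω‖)^2 = W i ω := by
      rw [hWdef, mul_pow, hexp2]
    have h3 : Real.exp ⟪ξ, X i ω⟫ * ‖X i ω‖ ≤ 1 + W i ω := by
      nlinarith [sq_nonneg (Real.exp ⟪ξ, X i ω⟫ * ‖X i ω‖ - 1)]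
    have habs : 0 ≤ |Y i ω| := abs_nonneg _
    calc Real.exp ⟪ξ, X i ω⟫ * |Y i ω| * ‖X i ω‖
        = |Y i ω| * (Real.exp ⟪ξ, X i ω⟫ * ‖X i ω‖) := by ring
      _ ≤ M * (1 + W i ω) := by
          have hWnn : 0 ≤ W i ω := by rw [← h2]; positivity
          nlinarith [mul_nonneg (sub_nonneg.mpr hYω) hnn]
  have hvint : Integrable v μ := by
    rw [hvdef]
    exact integrable_finset_sum _ (fun i _ => hZint i)
  -- projection of the mean
  have hck : ∀ k, c k = ∫ ω, Sk k ω ∂μ := by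
    intro k
    have h1 : (EuclideanSpace.proj k : EuclideanSpace ℝ (Fin d) →L[ℝ] ℝ) c
        = ∫ ω, (EuclideanSpace.proj k : EuclideanSpace ℝ (Fin d) →L[ℝ] ℝ) (v ω) ∂μ :=
      ((EuclideanSpace.proj k : EuclideanSpace ℝ (Fin d) →L[ℝ] ℝ).integral_comp_comm hvint).symm
    have h2 : ∀ ω, (EuclideanSpace.proj k : EuclideanSpace ℝ (Fin d) →L[ℝ] ℝ) (v ω)
        = Sk k ω := by
      intro ω
      rw [hvdef, hSk_app, map_sum]
      refine Finset.sum_congr rfl fun i _ => ?_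
      rw [_root_.map_smul]
      simp [hZkdef, smul_eq_mul]
    have h3 : (EuclideanSpace.proj k : EuclideanSpace ℝ (Fin d) →L[ℝ] ℝ) c = c k := rfl
    rw [← h3, h1]
    exact integral_congr_ae (Filter.Eventually.of_forall h2)
  have happ : ∀ ω k, v ω k = Sk k ω := by
    intro ω k
    have h2 : (EuclideanSpace.proj k : EuclideanSpace ℝ (Fin d) →L[ℝ] ℝ) (v ω) = Sk k ω := by
      rw [hvdef, hSk_app, map_sum]
      refine Finset.sum_congr rfl fun i _ => ?_
      rw [_root_.map_smul]
      simp [hZkdef, smul_eq_mul]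
    exact h2.symm ▸ rfl
  have hT2 : ∀ ω, ‖v ω - c‖^2 = ∑ k, (Sk k ω - c k)^2 := by
    intro ω
    rw [norm_sq_eq_sum']
    refine Finset.sum_congr rfl fun k _ => ?_
    have h4 : (v ω - c) k = v ω k - c k := rfl
    rw [h4, happ]
  have hSkc_int : ∀ k, Integrable (fun ω => (Sk k ω - c k)^2) μ := by
    intro k
    have h5 := ((hSkMem k).sub (memLp_const (c k))).integrable_sq
    refine h5.congr (Filter.Eventually.of_forall fun ω => ?_)
    simp [Pi.sub_apply]
  have hT2int : Integrable (fun ω => ‖v ω - c‖^2) μ := by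
    refine (integrable_finset_sum Finset.univ (fun k _ => hSkc_int k)).congr
      (Filter.Eventually.of_forall fun ω => ?_)
    simpa using (hT2 ω).symm
  -- the variance bound
  have hT2val : ∫ ω, ‖v ω - c‖^2 ∂μ ≤ n * (M^2 * C) := by
    have h6 : ∫ ω, ‖v ω - c‖^2 ∂μ = ∑ k, ∫ ω, (Sk k ω - c k)^2 ∂μ := by
      rw [← integral_finset_sum _ (fun k _ => hSkc_int k)]
      exact integral_congr_ae (Filter.Eventually.of_forall fun ω => hT2 ω)
    have h7 : ∀ k, ∫ ω, (Sk k ω - c k)^2 ∂μ = variance (Sk k) μ := by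
      intro k
      rw [variance_eq_integral (hSkMem k).1.aemeasurable, hck k]
    have h8 : ∀ k i, variance (Zk k i) μ ≤ M^2 * ∫ ω, Wk k i ω ∂μ := by
      intro k i
      refine le_trans (variance_le_expectation_sq (hZkm k i).aestronglyMeasurable) ?_
      have := hZk2val k i
      simpa [Pi.pow_apply] using this
    calc ∫ ω, ‖v ω - c‖^2 ∂μ = ∑ k, ∫ ω, (Sk k ω - c k)^2 ∂μ := h6
      _ = ∑ k, variance (Sk k) μ := Finset.sum_congr rfl fun k _ => h7 k
      _ = ∑ k, ∑ i, variance (Zk k i) μ := Finset.sum_congr rfl fun k _ => hVarSk k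
      _ ≤ ∑ k, ∑ i, M^2 * ∫ ω, Wk k i ω ∂μ :=
          Finset.sum_le_sum fun k _ => Finset.sum_le_sum fun i _ => h8 k i
      _ = ∑ i : Fin n, M^2 * ∑ k, ∫ ω, Wk k i ω ∂μ := by
          rw [Finset.sum_comm]
          exact Finset.sum_congr rfl fun i _ => by rw [Finset.mul_sum]
      _ = ∑ i : Fin n, M^2 * C := Finset.sum_congr rfl fun i _ => by rw [hWk_sum i]
      _ = n * (M^2 * C) := by rw [Finset.sum_const, Finset.card_univ, Fintype.card_fin,
            nsmul_eq_mul]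
  -- Chebyshev/Markov
  have hsets : {ω | (n:ℝ)*δ ≤ ‖v ω - c‖} = {ω | ((n:ℝ)*δ)^2 ≤ ‖v ω - c‖^2} := by
    ext ω
    simp only [Set.mem_setOf_eq]
    constructor
    · intro h
      exact pow_le_pow_left₀ (by positivity) h 2
    · intro h
      have := Real.sqrt_le_sqrt h
      rwa [Real.sqrt_sq (by positivity), Real.sqrt_sq (norm_nonneg _)] at this
  have hmark := mul_meas_ge_le_integral_of_nonneg
    (ae_of_all μ fun ω => sq_nonneg ‖v ω - c‖) hT2int (((n:ℝ)*δ)^2)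
  have hε : (0:ℝ) < ((n:ℝ)*δ)^2 := by positivity
  have hfin : (μ {ω | (n:ℝ)*δ ≤ ‖v ω - c‖}).toReal
      ≤ (n * (M^2 * C)) / ((n:ℝ)*δ)^2 := by
    rw [hsets, le_div_iff₀ hε]
    calc (μ {ω | ((n:ℝ)*δ)^2 ≤ ‖v ω - c‖^2}).toReal * ((n:ℝ)*δ)^2
        = ((n:ℝ)*δ)^2 * (μ {ω | ((n:ℝ)*δ)^2 ≤ ‖v ω - c‖^2}).toReal := mul_comm _ _
      _ ≤ ∫ ω, ‖v ω - c‖^2 ∂μ := hmark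
      _ ≤ n * (M^2 * C) := hT2val
  refine le_trans hfin (le_of_eq ?_)
  rw [hCdef]
  field_simp
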